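/- Let h : ℕ₊ × ℕ₊ → ℝ (arguments written (k, c)) be describable, i.e., there exists a finite set F of good real polynomials in the two variables k, c such that for all k, c ∈ ℕ₊ there exists p ∈ F with p(k, c) = h(k, c). Then for every ε > 0 there exist k, c ∈ ℕ₊ such that |h(k, c) − (k²+kc)kc/(k³+k²+kc)| > ε. In particular, h does not uniformly approximate (k, c) ↦ (k²+kc)kc/(k³+k²+kc). -/

import Mathlib

open MvPolynomial

/-- A two-variable real polynomial (variable `0` = k, variable `1` = c) is *good* if
every monomial with positive degree in `c` also has positive degree in `k`. -/
def GoodPoly (p : MvPolynomial (Fin 2) ℝ) : Prop :=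
  ∀ m ∈ p.support, 0 < m 1 → 0 < m 0

section Aux

open Polynomial Filter

/-- Evaluating the univariate polynomial obtained by substituting `C c` for the second
variable agrees with full evaluation. -/
lemma eval_aeval_slice (p : MvPolynomial (Fin 2) ℝ) (c x : ℝ) :
    Polynomial.eval x (MvPolynomial.aeval ![Polynomial.X, Polynomial.C c] p)
      = MvPolynomial.eval ![x, c] p := by
  have h := MvPolynomial.comp_aeval_apply
    (f := ![Polynomial.X, Polynomial.C c]) (φ := Polynomial.aeval x) p
  rw [Polynomial.coe_aeval_eq_eval] at h
  rw [h]
  have hfun : (fun i => Polynomial.eval x (![Polynomial.X, Polynomial.C c] i))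
      = ![x, c] := by
    funext i
    fin_cases i <;> simp
  rw [hfun]
  rw [← MvPolynomial.coe_aeval_eq_eval]
  rfl

/-- For a good polynomial, evaluating at `k = 0` kills all `c`-dependence. -/
lemma good_eval_zero (p : MvPolynomial (Fin 2) ℝ) (hp : GoodPoly p) (c : ℝ) :
    MvPolynomial.eval ![0, c] p = MvPolynomial.eval ![(0:ℝ), 0] p := by
  rw [MvPolynomial.eval_eq, MvPolynomial.eval_eq]
  apply Finset.sum_congr rfl
  intro m hm
  by_cases h0 : m 0 = 0
  · have h1 : m 1 = 0 := by
      by_contra h1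
      have := hp m hm (Nat.pos_of_ne_zero h1)
      omega
    congr 1
    apply Finset.prod_congr rfl
    intro i hi
    have hne := Finsupp.mem_support_iff.mp hi
    fin_cases i
    · exact absurd h0 hne
    · exact absurd h1 hne
  · have hmem : (0 : Fin 2) ∈ m.support := Finsupp.mem_support_iff.mpr h0
    rw [Finset.prod_eq_zero hmem (by simp [zero_pow h0]),
      Finset.prod_eq_zero hmem (by simp [zero_pow h0])]

/-- A real polynomial bounded on an infinite set of naturals has degree ≤ 0. -/
lemma degree_le_zero_of_bdd (q : Polynomial ℝ) (S : Set ℕ) (hS : S.Infinite) (B : ℝ)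
    (hb : ∀ k ∈ S, |Polynomial.eval (k : ℝ) q| ≤ B) : q.degree ≤ 0 := by
  by_contra hd
  push_neg at hd
  have ht := Polynomial.abs_tendsto_atTop q hd
  obtain ⟨x₀, hx₀⟩ := (tendsto_atTop.mp ht (B + 1)).exists_forall_of_atTop
  obtain ⟨k, hkS, hk⟩ := hS.exists_gt (Nat.ceil (max x₀ 0))
  have hxk : x₀ ≤ (k : ℝ) := by
    calc x₀ ≤ max x₀ 0 := le_max_left _ _
    _ ≤ (Nat.ceil (max x₀ 0) : ℝ) := Nat.le_ceil _
    _ ≤ (k : ℝ) := by exact_mod_cast le_of_lt hk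
  have := hx₀ (k : ℝ) hxk
  have := hb k hkS
  linarith

end Aux

/-- If `h : ℕ₊ × ℕ₊ → ℝ` is describable, i.e. weakly-described by a finite set of good
polynomials in `k, c`, then `h` does not uniformly approximate
`(k, c) ↦ (k²+kc)kc/(k³+k²+kc)`. -/
theorem describable_not_approx_ratio (h : ℕ → ℕ → ℝ)
    (F : Finset (MvPolynomial (Fin 2) ℝ))
    (hgood : ∀ p ∈ F, GoodPoly p)
    (hdesc : ∀ k c : ℕ, 0 < k → 0 < c →
      ∃ p ∈ F, eval ![(k : ℝ), (c : ℝ)] p = h k c) :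
    ∀ ε : ℝ, 0 < ε → ∃ k c : ℕ, 0 < k ∧ 0 < c ∧
      |h k c - ((k : ℝ) ^ 2 + (k : ℝ) * (c : ℝ)) * (k : ℝ) * (c : ℝ) /
          ((k : ℝ) ^ 3 + (k : ℝ) ^ 2 + (k : ℝ) * (c : ℝ))| > ε := by
  by_contra hcon
  push_neg at hcon
  obtain ⟨ε, hε, hb⟩ := hcon
  -- the target function
  set f : ℕ → ℕ → ℝ := fun k c =>
    ((k : ℝ) ^ 2 + (k : ℝ) * (c : ℝ)) * (k : ℝ) * (c : ℝ) /
      ((k : ℝ) ^ 3 + (k : ℝ) ^ 2 + (k : ℝ) * (c : ℝ)) with hf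
  -- F is nonempty
  obtain ⟨p₀, hp₀F, _⟩ := hdesc 1 1 one_pos one_pos
  have hFne : F.Nonempty := ⟨p₀, hp₀F⟩
  -- M : bound for all constant values
  set M : ℝ := F.sup' hFne (fun p => MvPolynomial.eval ![(0:ℝ), 0] p) with hM
  -- choose c large
  obtain ⟨c, hc'⟩ := exists_nat_gt (max (M + ε + 2) 1)
  have hc : M + ε + 2 < (c : ℝ) := lt_of_le_of_lt (le_max_left _ _) hc'
  have hc1 : 0 < c := by
    by_contra hc0
    push_neg at hc0
    interval_cases c
    simp at hc'
    linarith [hc'.2]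
  have hcR : (1:ℝ) ≤ (c:ℝ) := by exact_mod_cast hc1
  -- pigeonhole: some p ∈ F agrees with h on an infinite set of k's
  have hpos_inf : ({k : ℕ | 0 < k}).Infinite :=
    Set.infinite_of_forall_exists_gt (fun a => ⟨a + 1, Nat.succ_pos a, lt_add_one a⟩)
  have hexists : ∃ p ∈ F,
      ({k : ℕ | 0 < k ∧ MvPolynomial.eval ![(k:ℝ), (c:ℝ)] p = h k c}).Infinite := by
    by_contra hno
    push_neg at hno
    have hfin : (⋃ p ∈ (F : Set (MvPolynomial (Fin 2) ℝ)),
        {k : ℕ | 0 < k ∧ MvPolynomial.eval ![(k:ℝ), (c:ℝ)] p = h k c}).Finite := by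
      apply Set.Finite.biUnion F.finite_toSet
      intro p hp
      exact hno p hp
    apply hfin.not_infinite
    apply Set.Infinite.mono _ hpos_inf
    intro k hk
    obtain ⟨p, hpF, hpk⟩ := hdesc k c hk hc1
    exact Set.mem_biUnion hpF ⟨hk, hpk⟩
  obtain ⟨p, hpF, hSinf⟩ := hexists
  set S : Set ℕ := {k : ℕ | 0 < k ∧ MvPolynomial.eval ![(k:ℝ), (c:ℝ)] p = h k c} with hSdef
  -- the univariate slice polynomial
  set q : Polynomial ℝ := MvPolynomial.aeval ![Polynomial.X, Polynomial.C (c:ℝ)] p with hq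
  -- bounds on f
  have hfb : ∀ k : ℕ, 0 < k → 0 ≤ f k c ∧ f k c ≤ (c:ℝ) + (c:ℝ)^2 := by
    intro k hk
    have hkR : (1:ℝ) ≤ (k:ℝ) := by exact_mod_cast hk
    have hk0 : (0:ℝ) ≤ (k:ℝ) := by positivity
    have hc0 : (0:ℝ) ≤ (c:ℝ) := by positivity
    have hD : (0:ℝ) < (k : ℝ) ^ 3 + (k : ℝ) ^ 2 + (k : ℝ) * (c : ℝ) := by nlinarith
    constructor
    · exact div_nonneg (by positivity) hD.le
    · rw [hf]
      rw [div_le_iff₀ hD]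
      nlinarith [mul_nonneg (mul_nonneg hk0 hk0) hc0,
        mul_nonneg (mul_nonneg hk0 hc0) hc0,
        mul_nonneg (mul_nonneg (mul_nonneg hk0 hk0) hk0) (mul_nonneg hc0 hc0),
        mul_nonneg hk0 (mul_nonneg hc0 (mul_nonneg hc0 hc0))]
  -- q is bounded on S, hence constant
  have hqb : ∀ k ∈ S, |Polynomial.eval (k : ℝ) q| ≤ ε + (c:ℝ) + (c:ℝ)^2 := by
    intro k hkS
    obtain ⟨hk, hkh⟩ := hkS
    rw [hq, eval_aeval_slice, hkh]
    have h1 := hb k c hk hc1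
    obtain ⟨h2, h3⟩ := hfb k hk
    rw [abs_le] at h1 ⊢
    constructor <;> [skip; skip] <;> cases' h1 with h1a h1b <;> nlinarith
  have hdeg : q.degree ≤ 0 := degree_le_zero_of_bdd q S hSinf _ hqb
  have hqC : q = Polynomial.C (q.coeff 0) := Polynomial.eq_C_of_degree_le_zero hdeg
  -- value of q is the constant value of p, which is ≤ M
  have hval : ∀ k : ℕ, k ∈ S → h k c = MvPolynomial.eval ![(0:ℝ), 0] p := by
    intro k hkS
    obtain ⟨hk, hkh⟩ := hkS
    have e1 : Polynomial.eval (k:ℝ) q = Polynomial.eval 0 q := by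
      rw [hqC]; simp
    rw [hq, eval_aeval_slice, eval_aeval_slice] at e1
    rw [← hkh, e1]
    exact good_eval_zero p (hgood p hpF) _
  have hle : MvPolynomial.eval ![(0:ℝ), 0] p ≤ M :=
    Finset.le_sup' (fun p => MvPolynomial.eval ![(0:ℝ), 0] p) hpF
  -- find k ∈ S with k ≥ c: then f k c ≥ c - 1
  obtain ⟨k, hkS, hk⟩ := hSinf.exists_gt c
  have hkpos : 0 < k := hkS.1
  have hkR : (1:ℝ) ≤ (k:ℝ) := by exact_mod_cast hkpos
  have hkc : (c:ℝ) ≤ (k:ℝ) := by exact_mod_cast hk.le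
  have hk0 : (0:ℝ) ≤ (k:ℝ) := by positivity
  have hc0 : (0:ℝ) ≤ (c:ℝ) := by positivity
  have hD : (0:ℝ) < (k : ℝ) ^ 3 + (k : ℝ) ^ 2 + (k : ℝ) * (c : ℝ) := by nlinarith
  have hflow : (c:ℝ) - 1 ≤ f k c := by
    rw [hf]
    rw [le_div_iff₀ hD]
    nlinarith [mul_nonneg (mul_nonneg hk0 hk0) (sub_nonneg.mpr hkc),
      mul_nonneg (mul_nonneg hk0 (mul_nonneg hc0 hc0)) (sub_nonneg.mpr hkR),
      mul_nonneg hk0 hk0, mul_nonneg hk0 hc0]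
  have h1 := hb k c hkpos hc1
  rw [abs_le] at h1
  have hhk : h k c = MvPolynomial.eval ![(0:ℝ), 0] p := hval k hkS
  -- h k c ≥ f k c - ε ≥ c - 1 - ε > M ≥ h k c, contradiction
  have : (c:ℝ) - 1 - ε ≤ h k c := by
    have := h1.1
    simp only [hf] at hflow this ⊢
    linarith
  rw [hhk] at this
  linarith
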